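/- arXiv:2603.12272 — 2 statements merged into one kernel-verified Lean document; each statement's English description precedes it below -/
import Mathlib

section
/- Let α > 2, κ > 0, γ ≥ 1, δ ∈ (0,1), and let Y = (Y_1, …, Y_d) be a random vector such that each coordinate satisfies the sub-Gaussian tail bound P(|Y_i| ≥ t) ≤ 2 exp(−t² / (2 κ² v_i)) for all t > 0, where v_1, …, v_d > 0. Assume the decreasing rearrangement of (v_1,…,v_d) satisfies v_(j) ≤ γ · j^{−1/(α−1)} for all j ∈ {1,…,d}. Then with probability at least 1 − δ, for every j ∈ {1,…,d}: |Y|_(j) ≤ κ √(2 γ log(2d/δ)) · j^{−1/(2(α−1))}; equivalently, Y lies in the weak-ℓ_{p(α)} ball of radius κ√(2γ log(2d/δ)) with p(α) = 2(α−1). -/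
open MeasureTheory

/-- **High-probability weak-ℓp membership of a sub-Gaussian random vector with
power-law variance profile.**  Let `α > 2`, `κ > 0`, `γ ≥ 1`, `δ ∈ (0,1)`, and
let `Y = (Y_1, …, Y_d)` be a random vector whose coordinates satisfy
`P(|Y_i| ≥ t) ≤ 2 exp(−t² / (2 κ² v_i))` for all `t > 0`, with `v_i > 0`.
Assume the decreasing rearrangement of `v` (realized by a sorting permutation
`τ`) satisfies `v_(j) ≤ γ · j^(−1/(α−1))` for all `j`.  Then with probability
at least `1 − δ`, for every `j`:
`|Y|_(j) ≤ κ √(2 γ log(2d/δ)) · j^(−1/(2(α−1)))`, i.e. `Y` lies in the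
weak-ℓ_{p(α)} ball of radius `κ √(2γ log(2d/δ))` with `p(α) = 2(α−1)`.
(The decreasing rearrangement of `Y(ω)` is expressed via any permutation `σ`
sorting the magnitudes `|Y_i(ω)|` in nonincreasing order.) -/
theorem subgaussian_powerlaw_weak_lp_ball
    {Ω : Type*} [MeasurableSpace Ω] (μ : Measure Ω) [IsProbabilityMeasure μ]
    (d : ℕ) (hd : 1 ≤ d) (α κ γ δ : ℝ)
    (hα : 2 < α) (hκ : 0 < κ) (hγ : 1 ≤ γ) (hδ0 : 0 < δ) (hδ1 : δ < 1)
    (Y : Fin d → Ω → ℝ) (v : Fin d → ℝ) (hv : ∀ i, 0 < v i)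
    (htail : ∀ i, ∀ t : ℝ, 0 < t →
      μ {ω | t ≤ |Y i ω|}
        ≤ ENNReal.ofReal (2 * Real.exp (-(t ^ 2) / (2 * κ ^ 2 * v i))))
    (τ : Equiv.Perm (Fin d))
    (hτ : Antitone (fun j : Fin d => v (τ j)))
    (hvdecay : ∀ j : Fin d,
      v (τ j) ≤ γ * (((j : ℕ) : ℝ) + 1) ^ (-(1 / (α - 1)))) :
    ENNReal.ofReal (1 - δ)
      ≤ μ {ω | ∀ σ : Equiv.Perm (Fin d),
            Antitone (fun j : Fin d => |Y (σ j) ω|) →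
            ∀ j : Fin d,
              |Y (σ j) ω|
                ≤ κ * Real.sqrt (2 * γ * Real.log (2 * d / δ)) *
                    (((j : ℕ) : ℝ) + 1) ^ (-(1 / (2 * (α - 1))))} := by

  have hd0 : (0:ℝ) < d := by exact_mod_cast hd
  set L := Real.log (2 * d / δ) with hLdef
  have hL : 0 < L := by
    apply Real.log_pos
    rw [lt_div_iff₀ hδ0]
    nlinarith [hd0, hδ1, (by exact_mod_cast hd : (1:ℝ) ≤ d)]
  have hα1 : (0:ℝ) < α - 1 := by linarith
  set t : Fin d → ℝ := fun i => κ * Real.sqrt (2 * L * v i) with htdef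
  have ht0 : ∀ i, 0 < t i := fun i =>
    mul_pos hκ (Real.sqrt_pos.2 (mul_pos (mul_pos two_pos hL) (hv i)))
  have htail' : ∀ i, μ {ω | t i ≤ |Y i ω|} ≤ ENNReal.ofReal (δ / d) := by
    intro i
    refine le_trans (htail i (t i) (ht0 i)) (le_of_eq ?_)
    congr 1
    have hsq : t i ^ 2 = κ ^ 2 * (2 * L * v i) := by
      have hti : t i = κ * Real.sqrt (2 * L * v i) := rfl
      rw [hti, mul_pow, Real.sq_sqrt (le_of_lt (mul_pos (mul_pos two_pos hL) (hv i)))]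
    rw [hsq]
    have hexp : -(κ ^ 2 * (2 * L * v i)) / (2 * κ ^ 2 * v i) = -L := by
      rw [div_eq_iff (mul_pos (mul_pos two_pos (pow_pos hκ 2)) (hv i)).ne']
      ring
    rw [hexp, Real.exp_neg, hLdef, Real.exp_log (by positivity)]
    field_simp
  have hs : μ (⋃ i, {ω | t i ≤ |Y i ω|}) ≤ ENNReal.ofReal δ := by
    calc μ (⋃ i, {ω | t i ≤ |Y i ω|}) ≤ (∑ i : Fin d, μ {ω | t i ≤ |Y i ω|}) :=
          measure_iUnion_fintype_le _ _
      _ ≤ (∑ i : Fin d, ENNReal.ofReal (δ / d)) := Finset.sum_le_sum (fun i _ => htail' i)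
      _ = (d : ENNReal) * ENNReal.ofReal (δ / d) := by
          rw [Finset.sum_const, Finset.card_univ, Fintype.card_fin, nsmul_eq_mul]
      _ = ENNReal.ofReal δ := by
          rw [← ENNReal.ofReal_natCast d, ← ENNReal.ofReal_mul (by positivity)]
          congr 1
          field_simp
  have hcompl : ENNReal.ofReal (1 - δ) ≤ μ (⋃ i, {ω | t i ≤ |Y i ω|})ᶜ := by
    have h1 : (1 : ENNReal) ≤ μ (⋃ i, {ω | t i ≤ |Y i ω|}) + μ (⋃ i, {ω | t i ≤ |Y i ω|})ᶜ := by
      rw [← measure_univ (μ := μ), ← Set.union_compl_self (⋃ i, {ω | t i ≤ |Y i ω|})]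
      exact measure_union_le _ _
    have h2 : (1 : ENNReal) ≤ ENNReal.ofReal δ + μ (⋃ i, {ω | t i ≤ |Y i ω|})ᶜ :=
      le_trans h1 (add_le_add_left hs _)
    have h3 : ENNReal.ofReal (1 - δ) = 1 - ENNReal.ofReal δ := by
      rw [ENNReal.ofReal_sub _ hδ0.le, ENNReal.ofReal_one]
    rw [h3]
    exact tsub_le_iff_left.mpr h2
  refine le_trans hcompl (measure_mono ?_)
  intro ω hω
  simp only [Set.mem_compl_iff, Set.mem_iUnion, Set.mem_setOf_eq, not_exists, not_le] at hω
  intro σ hσ j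
  obtain ⟨m, hmj, hjm⟩ : ∃ m : Fin d, m ≤ j ∧ j ≤ τ.symm (σ m) := by
    by_contra hcon
    push_neg at hcon
    have hinj : Function.Injective (fun m : Fin d => τ.symm (σ m)) :=
      τ.symm.injective.comp σ.injective
    have himg : (Finset.Iic j).image (fun m : Fin d => τ.symm (σ m)) ⊆ Finset.Iio j := by
      intro k hk
      simp only [Finset.mem_image, Finset.mem_Iic] at hk
      obtain ⟨m, hm, rfl⟩ := hk
      exact Finset.mem_Iio.2 (hcon m hm)
    have hcard := Finset.card_le_card himg
    rw [Finset.card_image_of_injective _ hinj, Fin.card_Iic, Fin.card_Iio] at hcard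
    omega
  have hσm : σ m = τ (τ.symm (σ m)) := (τ.apply_symm_apply (σ m)).symm
  have h1 : |Y (σ j) ω| ≤ |Y (σ m) ω| := hσ hmj
  have h2 : |Y (σ m) ω| < t (σ m) := hω (σ m)
  set x : ℝ := ((j : ℕ) : ℝ) + 1 with hxdef
  have hx : (0:ℝ) < x := by positivity
  have h3 : v (σ m) ≤ γ * x ^ (-(1 / (α - 1))) := by
    rw [hσm]
    exact le_trans (hτ hjm) (hvdecay j)
  have h4 : t (σ m) ≤ κ * Real.sqrt (2 * L * (γ * x ^ (-(1 / (α - 1))))) := by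
    apply mul_le_mul_of_nonneg_left _ hκ.le
    apply Real.sqrt_le_sqrt
    nlinarith
  have h5 : Real.sqrt (2 * L * (γ * x ^ (-(1 / (α - 1)))))
      = Real.sqrt (2 * γ * L) * x ^ (-(1 / (2 * (α - 1)))) := by
    rw [show 2 * L * (γ * x ^ (-(1 / (α - 1)))) = (2 * γ * L) * x ^ (-(1 / (α - 1))) by ring]
    rw [Real.sqrt_mul (by nlinarith) _]
    congr 1
    rw [Real.sqrt_eq_rpow, ← Real.rpow_mul hx.le]
    congr 1
    field_simp
  calc |Y (σ j) ω| ≤ |Y (σ m) ω| := h1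
    _ ≤ t (σ m) := h2.le
    _ ≤ κ * Real.sqrt (2 * L * (γ * x ^ (-(1 / (α - 1))))) := h4
    _ = κ * Real.sqrt (2 * γ * L) * x ^ (-(1 / (2 * (α - 1)))) := by
        rw [h5]; ring
end

section
/- Let α > 2, κ > 0, γ ≥ 1, δ ∈ (0,1), and let Y = (Y_1, …, Y_d) be a random vector such that each coordinate satisfies P(|Y_i| ≥ t) ≤ 2 exp(−t² / (2 κ² v_i)) for all t > 0, where v_1, …, v_d > 0 and the decreasing rearrangement satisfies v_(j) ≤ γ · j^{−1/(α−1)} for all j. Then with probability at least 1 − δ, simultaneously for every K ∈ {1,…,d}, the Top-K truncation error satisfies ‖Y − T_K(Y)‖₂² ≤ 2 γ κ² log(2d/δ) · ((α−1)/(α−2)) · (d^{(α−2)/(α−1)} − K^{(α−2)/(α−1)}). -/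
open MeasureTheory Finset
open scoped ENNReal

/-- MVT-based step: `(1-p)·(x+1)^{-p} ≤ (x+1)^{1-p} - x^{1-p}` for `0<p<1`, `x ≥ 1`. -/
lemma bern_step {p x : ℝ} (hp0 : 0 < p) (hp1 : p < 1) (hx : 1 ≤ x) :
    (1 - p) * (x + 1) ^ (-p) ≤ (x + 1) ^ (1 - p) - x ^ (1 - p) := by
  have hx0 : (0:ℝ) < x := lt_of_lt_of_le one_pos hx
  have hlt : x < x + 1 := lt_add_one x
  have hcont : ContinuousOn (fun y : ℝ => y ^ (1 - p)) (Set.Icc x (x + 1)) := by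
    apply ContinuousOn.rpow_const continuousOn_id
    intro y hy
    exact Or.inl (ne_of_gt (lt_of_lt_of_le hx0 hy.1))
  have hderiv : ∀ y ∈ Set.Ioo x (x + 1),
      HasDerivAt (fun y : ℝ => y ^ (1 - p)) ((1 - p) * y ^ (1 - p - 1)) y := by
    intro y hy
    exact Real.hasDerivAt_rpow_const (Or.inl (ne_of_gt (hx0.trans hy.1)))
  obtain ⟨c, hc, hceq⟩ := exists_hasDerivAt_eq_slope (fun y : ℝ => y ^ (1 - p))
    (fun y => (1 - p) * y ^ (1 - p - 1)) hlt hcont hderiv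
  have hc0 : 0 < c := hx0.trans hc.1
  have h1 : (x + 1) ^ (1 - p - 1) ≤ c ^ (1 - p - 1) :=
    Real.rpow_le_rpow_of_nonpos hc0 hc.2.le (by linarith)
  have hps : (1 - p - 1 : ℝ) = -p := by ring
  have h2 : (1 - p) * (x + 1) ^ (-p) ≤ (1 - p) * c ^ (1 - p - 1) := by
    rw [← hps]
    exact mul_le_mul_of_nonneg_left h1 (by linarith)
  rw [hceq] at h2
  calc (1 - p) * (x + 1) ^ (-p)
      ≤ ((x + 1) ^ (1 - p) - x ^ (1 - p)) / (x + 1 - x) := h2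
    _ = (x + 1) ^ (1 - p) - x ^ (1 - p) := by norm_num

/-- Telescoping bound for the power-law tail sum. -/
lemma tail_sum_le {p : ℝ} (hp0 : 0 < p) (hp1 : p < 1) {K d : ℕ}
    (hK : 1 ≤ K) (hKd : K ≤ d) :
    ∑ j ∈ Finset.Ico K d, ((j : ℝ) + 1) ^ (-p)
      ≤ ((d : ℝ) ^ (1 - p) - (K : ℝ) ^ (1 - p)) / (1 - p) := by
  have hq : (0:ℝ) < 1 - p := by linarith
  rw [le_div_iff₀ hq, Finset.sum_mul]
  calc ∑ j ∈ Finset.Ico K d, ((j : ℝ) + 1) ^ (-p) * (1 - p)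
      ≤ ∑ j ∈ Finset.Ico K d, (((j : ℝ) + 1) ^ (1 - p) - (j : ℝ) ^ (1 - p)) := by
        apply Finset.sum_le_sum
        intro j hj
        have hj1 : (1:ℝ) ≤ (j : ℝ) := by
          exact_mod_cast le_trans hK (Finset.mem_Ico.mp hj).1
        have := bern_step hp0 hp1 hj1
        linarith
    _ = (d : ℝ) ^ (1 - p) - (K : ℝ) ^ (1 - p) := by
        rw [Finset.sum_Ico_eq_sum_range]
        calc ∑ i ∈ Finset.range (d - K), ((((K + i : ℕ) : ℝ) + 1) ^ (1 - p) - ((K + i : ℕ) : ℝ) ^ (1 - p))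
            = ∑ i ∈ Finset.range (d - K),
                ((fun n : ℕ => ((K + n : ℕ) : ℝ) ^ (1 - p)) (i + 1)
                  - (fun n : ℕ => ((K + n : ℕ) : ℝ) ^ (1 - p)) i) := by
              apply Finset.sum_congr rfl; intro i _; push_cast; ring_nf
          _ = ((K + (d - K) : ℕ) : ℝ) ^ (1 - p) - ((K + 0 : ℕ) : ℝ) ^ (1 - p) :=
              Finset.sum_range_sub (fun n : ℕ => ((K + n : ℕ) : ℝ) ^ (1 - p)) (d - K)
          _ = (d : ℝ) ^ (1 - p) - (K : ℝ) ^ (1 - p) := by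
              rw [Nat.add_sub_cancel' hKd, Nat.add_zero]


/-- **High-probability Top-K truncation error bound for a sub-Gaussian random
vector with power-law variance profile.**  Let `α > 2`, `κ > 0`, `γ ≥ 1`,
`δ ∈ (0,1)`, and let `Y = (Y_1, …, Y_d)` satisfy
`P(|Y_i| ≥ t) ≤ 2 exp(−t² / (2 κ² v_i))` for all `t > 0`, with `v_i > 0` whose
decreasing rearrangement (realized by the sorting permutation `τ`) satisfies
`v_(j) ≤ γ · j^(−1/(α−1))`.  Then with probability at least `1 − δ`,
simultaneously for every `K ∈ {1,…,d}`, the Top-K truncation error satisfies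
`‖Y − T_K(Y)‖₂² ≤ 2 γ κ² log(2d/δ) · ((α−1)/(α−2)) ·
(d^((α−2)/(α−1)) − K^((α−2)/(α−1)))`.
(For each outcome `ω`, the Top-K truncation is expressed via any permutation
`σ` sorting the magnitudes `|Y_i(ω)|` in nonincreasing order: it keeps the
coordinates at sorted positions `< K` and zeroes the rest.) -/
theorem subgaussian_powerlaw_topK_error_bound
    {Ω : Type*} [MeasurableSpace Ω] (μ : Measure Ω) [IsProbabilityMeasure μ]
    (d : ℕ) (hd : 1 ≤ d) (α κ γ δ : ℝ)
    (hα : 2 < α) (hκ : 0 < κ) (hγ : 1 ≤ γ) (hδ0 : 0 < δ) (hδ1 : δ < 1)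
    (Y : Fin d → Ω → ℝ) (v : Fin d → ℝ) (hv : ∀ i, 0 < v i)
    (htail : ∀ i, ∀ t : ℝ, 0 < t →
      μ {ω | t ≤ |Y i ω|}
        ≤ ENNReal.ofReal (2 * Real.exp (-(t ^ 2) / (2 * κ ^ 2 * v i))))
    (τ : Equiv.Perm (Fin d))
    (hτ : Antitone (fun j : Fin d => v (τ j)))
    (hvdecay : ∀ j : Fin d,
      v (τ j) ≤ γ * (((j : ℕ) : ℝ) + 1) ^ (-(1 / (α - 1)))) :
    ENNReal.ofReal (1 - δ)
      ≤ μ {ω | ∀ σ : Equiv.Perm (Fin d),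
            Antitone (fun j : Fin d => |Y (σ j) ω|) →
            ∀ K : ℕ, 1 ≤ K → K ≤ d →
              (∑ i : Fin d,
                  (Y i ω - (if ((σ.symm i : ℕ) < K) then Y i ω else 0)) ^ 2)
                ≤ 2 * γ * κ ^ 2 * Real.log (2 * d / δ) *
                    ((α - 1) / (α - 2)) *
                    ((d : ℝ) ^ ((α - 2) / (α - 1)) -
                      (K : ℝ) ^ ((α - 2) / (α - 1)))} := by
  have hd1 : (1:ℝ) ≤ (d:ℝ) := by exact_mod_cast hd
  have hd0 : (0:ℝ) < (d:ℝ) := by linarith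
  set L := Real.log (2 * d / δ) with hL
  have hLpos : 0 < L := Real.log_pos (by
    rw [lt_div_iff₀ hδ0]; nlinarith)
  set c := 2 * κ ^ 2 * L with hc
  have hcpos : 0 < c := mul_pos (mul_pos two_pos (pow_pos hκ 2)) hLpos
  set A : Fin d → Set Ω := fun i => {ω | Real.sqrt (c * v i) ≤ |Y i ω|} with hA
  have hAi : ∀ i, μ (A i) ≤ ENNReal.ofReal (δ / d) := by
    intro i
    have hcv : (0:ℝ) < c * v i := mul_pos hcpos (hv i)
    have hti : 0 < Real.sqrt (c * v i) := Real.sqrt_pos.mpr hcv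
    have h := htail i _ hti
    have hsq : Real.sqrt (c * v i) ^ 2 = c * v i := Real.sq_sqrt hcv.le
    rw [hsq] at h
    refine h.trans (le_of_eq ?_)
    congr 1
    have hexp : -(c * v i) / (2 * κ ^ 2 * v i) = -L := by
      rw [hc, div_eq_iff (mul_pos (mul_pos two_pos (pow_pos hκ 2)) (hv i)).ne']
      ring
    rw [hexp, Real.exp_neg, Real.exp_log (div_pos (by linarith) hδ0)]
    field_simp
  have hunion : μ (⋃ i, A i) ≤ ENNReal.ofReal δ := by
    calc μ (⋃ i, A i) ≤ ∑ i, μ (A i) := measure_iUnion_fintype_le μ A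
      _ ≤ ∑ i : Fin d, ENNReal.ofReal (δ / d) :=
          Finset.sum_le_sum (fun i _ => hAi i)
      _ = (d : ℝ≥0∞) * ENNReal.ofReal (δ / d) := by
          rw [Finset.sum_const, Finset.card_univ, Fintype.card_fin, nsmul_eq_mul]
      _ = ENNReal.ofReal δ := by
          rw [← ENNReal.ofReal_natCast d, ← ENNReal.ofReal_mul hd0.le]
          congr 1
          field_simp
  have hGsub : (⋃ i, A i)ᶜ ⊆ {ω | ∀ σ : Equiv.Perm (Fin d),
            Antitone (fun j : Fin d => |Y (σ j) ω|) →
            ∀ K : ℕ, 1 ≤ K → K ≤ d →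
              (∑ i : Fin d,
                  (Y i ω - (if ((σ.symm i : ℕ) < K) then Y i ω else 0)) ^ 2)
                ≤ 2 * γ * κ ^ 2 * Real.log (2 * d / δ) *
                    ((α - 1) / (α - 2)) *
                    ((d : ℝ) ^ ((α - 2) / (α - 1)) -
                      (K : ℝ) ^ ((α - 2) / (α - 1)))} := by
    intro ω hω
    simp only [Set.mem_compl_iff, Set.mem_iUnion, not_exists, hA,
      Set.mem_setOf_eq, not_le] at hω
    intro σ hσ K hK1 hKd
    have hY2 : ∀ i, (Y i ω) ^ 2 ≤ c * v i := by
      intro i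
      have h := hω i
      have hs := Real.sq_sqrt (mul_pos hcpos (hv i)).le
      nlinarith [abs_nonneg (Y i ω), sq_abs (Y i ω)]
    have key : ∀ j : Fin d, (Y (σ j) ω) ^ 2 ≤ c * v (τ j) := by
      intro j
      obtain ⟨k, hkj, hjk⟩ : ∃ k : Fin d, k ≤ j ∧ j ≤ τ.symm (σ k) := by
        by_contra h
        push_neg at h
        have hmaps : ∀ k ∈ Finset.Iic j, τ.symm (σ k) ∈ Finset.Iio j := by
          intro k hk
          exact Finset.mem_Iio.mpr (h k (Finset.mem_Iic.mp hk))
        have hinj : Set.InjOn (fun k => τ.symm (σ k)) (Finset.Iic j) := by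
          intro a _ b _ hab
          simpa using hab
        have hcard := Finset.card_le_card_of_injOn _ hmaps hinj
        rw [Fin.card_Iic, Fin.card_Iio] at hcard
        omega
      have h1 : |Y (σ j) ω| ≤ |Y (σ k) ω| := hσ hkj
      have h2 : (Y (σ j) ω) ^ 2 ≤ (Y (σ k) ω) ^ 2 := by
        rw [← sq_abs (Y (σ j) ω), ← sq_abs (Y (σ k) ω)]
        exact pow_le_pow_left₀ (abs_nonneg _) h1 2
      have h3 : v (σ k) ≤ v (τ j) := by
        have := hτ hjk
        simpa using this
      calc (Y (σ j) ω) ^ 2 ≤ (Y (σ k) ω) ^ 2 := h2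
        _ ≤ c * v (σ k) := hY2 (σ k)
        _ ≤ c * v (τ j) := mul_le_mul_of_nonneg_left h3 hcpos.le
    set p := 1 / (α - 1) with hp
    have hα2 : (0:ℝ) < α - 2 := by linarith
    have hα1 : (0:ℝ) < α - 1 := by linarith
    have hp0 : 0 < p := by rw [hp]; positivity
    have hp1 : p < 1 := by rw [hp, div_lt_one hα1]; linarith
    have h1p : 1 - p = (α - 2) / (α - 1) := by rw [hp]; field_simp; ring
    have e1 : (∑ i : Fin d,
          (Y i ω - (if ((σ.symm i : ℕ) < K) then Y i ω else 0)) ^ 2)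
        = ∑ j : Fin d, (if ((j : ℕ) < K) then 0 else (Y (σ j) ω) ^ 2) := by
      rw [← Equiv.sum_comp σ
        (fun i => (Y i ω - (if ((σ.symm i : ℕ) < K) then Y i ω else 0)) ^ 2)]
      refine Finset.sum_congr rfl fun j _ => ?_
      simp only [Equiv.symm_apply_apply]
      split <;> ring
    have e2 : ∑ j : Fin d, (if ((j : ℕ) < K) then (0:ℝ) else (Y (σ j) ω) ^ 2)
        ≤ ∑ j : Fin d,
            (if ((j : ℕ) < K) then (0:ℝ) else c * γ * (((j:ℕ):ℝ) + 1) ^ (-p)) := by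
      refine Finset.sum_le_sum fun j _ => ?_
      split
      · exact le_refl 0
      · calc (Y (σ j) ω) ^ 2 ≤ c * v (τ j) := key j
          _ ≤ c * (γ * (((j:ℕ):ℝ) + 1) ^ (-(1/(α-1)))) :=
              mul_le_mul_of_nonneg_left (hvdecay j) hcpos.le
          _ = c * γ * (((j:ℕ):ℝ) + 1) ^ (-p) := by rw [hp]; ring
    have e3 : ∑ j : Fin d,
          (if ((j : ℕ) < K) then (0:ℝ) else c * γ * (((j:ℕ):ℝ) + 1) ^ (-p))
        = ∑ j ∈ Finset.Ico K d, c * γ * ((j:ℝ) + 1) ^ (-p) := by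
      rw [Fin.sum_univ_eq_sum_range
        (fun j : ℕ => if j < K then (0:ℝ) else c * γ * ((j:ℝ) + 1) ^ (-p)) d]
      rw [Finset.range_eq_Ico, ← Finset.sum_Ico_consecutive _ (Nat.zero_le K) hKd]
      have h0 : ∑ j ∈ Finset.Ico 0 K,
          (if j < K then (0:ℝ) else c * γ * ((j:ℝ) + 1) ^ (-p)) = 0 :=
        Finset.sum_eq_zero fun j hj => if_pos (Finset.mem_Ico.mp hj).2
      have h1 : ∑ j ∈ Finset.Ico K d,
          (if j < K then (0:ℝ) else c * γ * ((j:ℝ) + 1) ^ (-p))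
          = ∑ j ∈ Finset.Ico K d, c * γ * ((j:ℝ) + 1) ^ (-p) :=
        Finset.sum_congr rfl fun j hj =>
          if_neg (not_lt.mpr (Finset.mem_Ico.mp hj).1)
      rw [h0, h1, zero_add]
    have e5 := tail_sum_le hp0 hp1 hK1 hKd
    calc (∑ i : Fin d,
          (Y i ω - (if ((σ.symm i : ℕ) < K) then Y i ω else 0)) ^ 2)
        = ∑ j : Fin d, (if ((j : ℕ) < K) then 0 else (Y (σ j) ω) ^ 2) := e1
      _ ≤ ∑ j : Fin d,
            (if ((j : ℕ) < K) then (0:ℝ) else c * γ * (((j:ℕ):ℝ) + 1) ^ (-p)) := e2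
      _ = ∑ j ∈ Finset.Ico K d, c * γ * ((j:ℝ) + 1) ^ (-p) := e3
      _ = c * γ * ∑ j ∈ Finset.Ico K d, ((j:ℝ) + 1) ^ (-p) := by
          rw [Finset.mul_sum]
      _ ≤ c * γ * (((d:ℝ) ^ (1 - p) - (K:ℝ) ^ (1 - p)) / (1 - p)) :=
          mul_le_mul_of_nonneg_left e5 (mul_pos hcpos (lt_of_lt_of_le one_pos hγ)).le
      _ = 2 * γ * κ ^ 2 * L * ((α - 1) / (α - 2)) *
            ((d : ℝ) ^ ((α - 2) / (α - 1)) - (K : ℝ) ^ ((α - 2) / (α - 1))) := by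
          rw [h1p, hc]
          field_simp
  have hG : ENNReal.ofReal (1 - δ) ≤ μ ((⋃ i, A i)ᶜ) := by
    have hu : (1:ℝ≥0∞) ≤ μ ((⋃ i, A i)ᶜ) + ENNReal.ofReal δ := by
      calc (1:ℝ≥0∞) = μ Set.univ := measure_univ.symm
        _ = μ ((⋃ i, A i)ᶜ ∪ (⋃ i, A i)) := by rw [Set.compl_union_self]
        _ ≤ μ ((⋃ i, A i)ᶜ) + μ (⋃ i, A i) := measure_union_le _ _
        _ ≤ μ ((⋃ i, A i)ᶜ) + ENNReal.ofReal δ := add_le_add le_rfl hunion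
    calc ENNReal.ofReal (1 - δ) = 1 - ENNReal.ofReal δ := by
          rw [ENNReal.ofReal_sub _ hδ0.le, ENNReal.ofReal_one]
      _ ≤ μ ((⋃ i, A i)ᶜ) := tsub_le_iff_right.mpr hu
  exact hG.trans (measure_mono hGsub)
end
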